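/- For nonempty A₁, A₂ ⊆ ℕ with A₁ ≠ {0}, setting 𝔪ᵢ := min(Aᵢ) and 𝔮ᵢ := gcd(Aᵢ − 𝔪ᵢ), the set A₁ ⋆ A₂ has minimum 𝔪₁·𝔪₂ and gcd((A₁ ⋆ A₂) − 𝔪₁𝔪₂) = gcd(𝔮₂, 𝔮₁·𝔪₂). -/
import Mathlib


open Pointwise

/-- `n ⋆ B`: the `n`-fold sumset of `B`, with `0 ⋆ B = {0}`. -/
def nstar : ℕ → Set ℕ → Set ℕ
  | 0, _ => {0}
  | n + 1, B => B + nstar n B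

/-- `A ⋆ B := ⋃_{a ∈ A} a ⋆ B`. -/
def starSet (A B : Set ℕ) : Set ℕ := ⋃ a ∈ A, nstar a B

/-- The gcd of a set of naturals: the greatest common divisor
(`0` if the set has no positive common-divisor bound, e.g. `S ⊆ {0}` or `S = ∅`). -/
noncomputable def setGcd (S : Set ℕ) : ℕ := sSup {d : ℕ | ∀ a ∈ S, d ∣ a}

lemma setGcd_dvd {S : Set ℕ} {a : ℕ} (ha : a ∈ S) : setGcd S ∣ a := by
  by_cases hS : ∀ b ∈ S, b = 0
  · rw [hS a ha]; exact dvd_zero _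
  · push_neg at hS
    obtain ⟨a₀, ha₀, ha₀0⟩ := hS
    have hbdd : BddAbove {d : ℕ | ∀ b ∈ S, d ∣ b} :=
      ⟨a₀, fun d hd => Nat.le_of_dvd (Nat.pos_of_ne_zero ha₀0) (hd a₀ ha₀)⟩
    have hne : {d : ℕ | ∀ b ∈ S, d ∣ b}.Nonempty := ⟨1, fun b _ => one_dvd b⟩
    exact Nat.sSup_mem hne hbdd a ha

lemma dvd_setGcd {S : Set ℕ} {d : ℕ} (h : ∀ a ∈ S, d ∣ a) : d ∣ setGcd S := by
  by_cases hS : ∀ b ∈ S, b = 0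
  · have : {e : ℕ | ∀ b ∈ S, e ∣ b} = Set.univ := by
      ext e; simp only [Set.mem_setOf_eq, Set.mem_univ, iff_true]
      intro b hb; rw [hS b hb]; exact dvd_zero _
    have : setGcd S = 0 := by
      unfold setGcd
      rw [this]
      exact Set.Infinite.Nat.sSup_eq_zero Set.infinite_univ
    rw [this]; exact dvd_zero d
  · push_neg at hS
    obtain ⟨a₀, ha₀, ha₀0⟩ := hS
    have hbdd : BddAbove {e : ℕ | ∀ b ∈ S, e ∣ b} :=
      ⟨a₀, fun e he => Nat.le_of_dvd (Nat.pos_of_ne_zero ha₀0) (he a₀ ha₀)⟩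
    have hne : {e : ℕ | ∀ b ∈ S, e ∣ b}.Nonempty := ⟨1, fun b _ => one_dvd b⟩
    have hg : setGcd S ∈ {e : ℕ | ∀ b ∈ S, e ∣ b} := Nat.sSup_mem hne hbdd
    have hl : Nat.lcm d (setGcd S) ∈ {e : ℕ | ∀ b ∈ S, e ∣ b} :=
      fun b hb => Nat.lcm_dvd (h b hb) (hg b hb)
    have h1 : Nat.lcm d (setGcd S) ≤ setGcd S := le_csSup hbdd hl
    have h2 : setGcd S ≤ Nat.lcm d (setGcd S) := by
      apply Nat.le_of_dvd
      · have : Nat.lcm d (setGcd S) ∣ a₀ := hl a₀ ha₀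
        exact Nat.pos_of_ne_zero fun h0 => ha₀0 (by simpa [h0] using this)
      · exact Nat.dvd_lcm_right _ _
    have : Nat.lcm d (setGcd S) = setGcd S := le_antisymm h1 h2
    exact this ▸ Nat.dvd_lcm_left _ _

lemma setGcd_smul (c : ℕ) (S : Set ℕ) : setGcd ((c * ·) '' S) = c * setGcd S := by
  apply Nat.dvd_antisymm
  · have hc : c ∣ setGcd ((c * ·) '' S) := by
      apply dvd_setGcd; rintro y ⟨a, _, rfl⟩; exact Dvd.intro a rfl
    rcases Nat.eq_zero_or_pos c with rfl | hcpos
    · simp only [zero_mul]; exact dvd_zero _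
    · obtain ⟨e, he⟩ := hc
      rw [he]
      apply Nat.mul_dvd_mul_left
      apply dvd_setGcd
      intro a ha
      have : c * e ∣ c * a := he ▸ setGcd_dvd ⟨a, ha, rfl⟩
      exact (Nat.mul_dvd_mul_iff_left hcpos).mp this
  · apply dvd_setGcd
    rintro y ⟨a, ha, rfl⟩
    exact Nat.mul_dvd_mul_left c (setGcd_dvd ha)

lemma nstar_mul_mem {B : Set ℕ} {b : ℕ} (hb : b ∈ B) (n : ℕ) : n * b ∈ nstar n B := by
  induction n with
  | zero => simp [nstar]
  | succ k ih =>
    have : (k + 1) * b = b + k * b := by ring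
    rw [this]
    exact Set.add_mem_add hb ih

lemma nstar_le {B : Set ℕ} {n x : ℕ} (hx : x ∈ nstar n B) : n * sInf B ≤ x := by
  induction n generalizing x with
  | zero => simp [nstar] at hx; omega
  | succ k ih =>
    obtain ⟨b, hb, y, hy, rfl⟩ := hx
    have h1 : sInf B ≤ b := Nat.sInf_le hb
    have h2 : k * sInf B ≤ y := ih hy
    have h3 : (k+1) * sInf B = sInf B + k * sInf B := by ring
    show (k+1) * sInf B ≤ b + y
    omega

lemma nstar_dvd {B : Set ℕ} {q n x : ℕ} (hq : ∀ b ∈ B, q ∣ b - sInf B)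
    (hx : x ∈ nstar n B) : q ∣ x - n * sInf B := by
  induction n generalizing x with
  | zero => simp [nstar] at hx; simp [hx]
  | succ k ih =>
    obtain ⟨b, hb, y, hy, rfl⟩ := hx
    have h1 : sInf B ≤ b := Nat.sInf_le hb
    have h2 : k * sInf B ≤ y := nstar_le hy
    have hkey : b + y - (k+1) * sInf B = (b - sInf B) + (y - k * sInf B) := by
      have h3 : (k+1) * sInf B = sInf B + k * sInf B := by ring
      omega
    show q ∣ b + y - (k+1) * sInf B
    rw [hkey]
    exact Nat.dvd_add (hq b hb) (ih hy)

lemma mem_starSet {A B : Set ℕ} {x : ℕ} : x ∈ starSet A B ↔ ∃ a ∈ A, x ∈ nstar a B := by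
  simp [starSet]

theorem gcd_param_star (A₁ A₂ : Set ℕ) (h₁ : A₁.Nonempty) (h₂ : A₂.Nonempty)
    (hA₁ : A₁ ≠ {0}) :
    sInf (starSet A₁ A₂) = sInf A₁ * sInf A₂ ∧
    setGcd ((fun a => a - sInf A₁ * sInf A₂) '' starSet A₁ A₂) =
      Nat.gcd (setGcd ((fun a => a - sInf A₂) '' A₂))
        (setGcd ((fun a => a - sInf A₁) '' A₁) * sInf A₂) := by
  set m₁ := sInf A₁ with hm₁def
  set m₂ := sInf A₂ with hm₂def
  have hm₁ : m₁ ∈ A₁ := Nat.sInf_mem h₁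
  have hm₂ : m₂ ∈ A₂ := Nat.sInf_mem h₂
  set q₁ := setGcd ((fun a => a - m₁) '' A₁) with hq₁def
  set q₂ := setGcd ((fun a => a - m₂) '' A₂) with hq₂def
  have hq₁ : ∀ a ∈ A₁, q₁ ∣ a - m₁ := fun a ha => setGcd_dvd ⟨a, ha, rfl⟩
  have hq₂ : ∀ b ∈ A₂, q₂ ∣ b - m₂ := fun b hb => setGcd_dvd ⟨b, hb, rfl⟩
  obtain ⟨a₁, ha₁, ha₁0⟩ : ∃ a ∈ A₁, a ≠ 0 := by
    by_contra hcon; push_neg at hcon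
    apply hA₁
    apply Set.eq_singleton_iff_nonempty_unique_mem.mpr ⟨h₁, fun a ha => hcon a ha⟩
  have hmm_mem : m₁ * m₂ ∈ starSet A₁ A₂ :=
    mem_starSet.mpr ⟨m₁, hm₁, nstar_mul_mem hm₂ m₁⟩
  have hlb : ∀ x ∈ starSet A₁ A₂, m₁ * m₂ ≤ x := by
    intro x hx
    obtain ⟨a, ha, hxa⟩ := mem_starSet.mp hx
    calc m₁ * m₂ ≤ a * m₂ := Nat.mul_le_mul_right m₂ (Nat.sInf_le ha)
    _ ≤ x := nstar_le hxa
  have hfirst : sInf (starSet A₁ A₂) = m₁ * m₂ :=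
    le_antisymm (Nat.sInf_le hmm_mem) (le_csInf ⟨_, hmm_mem⟩ hlb)
  refine ⟨hfirst, ?_⟩
  set L := setGcd ((fun a => a - m₁ * m₂) '' starSet A₁ A₂) with hLdef
  have hL : ∀ x ∈ starSet A₁ A₂, L ∣ x - m₁ * m₂ := fun x hx => setGcd_dvd ⟨x, hx, rfl⟩
  apply Nat.dvd_antisymm
  · -- L ∣ gcd q₂ (q₁ * m₂)
    apply Nat.dvd_gcd
    · -- L ∣ q₂
      apply dvd_setGcd
      rintro y ⟨b, hb, rfl⟩
      show L ∣ b - m₂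
      obtain ⟨k, rfl⟩ : ∃ k, a₁ = k + 1 := ⟨a₁ - 1, by omega⟩
      have hx1 : b + k * m₂ ∈ starSet A₁ A₂ :=
        mem_starSet.mpr ⟨k + 1, ha₁, Set.add_mem_add hb (nstar_mul_mem hm₂ k)⟩
      have hx2 : (k + 1) * m₂ ∈ starSet A₁ A₂ :=
        mem_starSet.mpr ⟨k + 1, ha₁, nstar_mul_mem hm₂ (k+1)⟩
      have h1 := hL _ hx1
      have h2 := hL _ hx2
      have hble : m₂ ≤ b := Nat.sInf_le hb
      have hm1le : m₁ ≤ k + 1 := Nat.sInf_le ha₁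
      have hQ : m₁ * m₂ ≤ (k+1) * m₂ := Nat.mul_le_mul_right m₂ hm1le
      have hP : (k+1) * m₂ = k * m₂ + m₂ := by ring
      have hkey : b - m₂ = (b + k * m₂ - m₁ * m₂) - ((k+1) * m₂ - m₁ * m₂) := by omega
      rw [hkey]
      exact Nat.dvd_sub h1 h2
    · -- L ∣ q₁ * m₂
      have : q₁ * m₂ = setGcd ((m₂ * ·) '' ((fun a => a - m₁) '' A₁)) := by
        rw [setGcd_smul, mul_comm]
      rw [this]
      apply dvd_setGcd
      rintro y ⟨z, ⟨a, ha, rfl⟩, rfl⟩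
      show L ∣ m₂ * (a - m₁)
      have hx : a * m₂ ∈ starSet A₁ A₂ :=
        mem_starSet.mpr ⟨a, ha, nstar_mul_mem hm₂ a⟩
      have := hL _ hx
      have heq : m₂ * (a - m₁) = a * m₂ - m₁ * m₂ := by
        rw [mul_comm, Nat.sub_mul]
      rw [heq]
      exact this
  · -- gcd q₂ (q₁ * m₂) ∣ L
    apply dvd_setGcd
    rintro y ⟨x, hx, rfl⟩
    show Nat.gcd q₂ (q₁ * m₂) ∣ x - m₁ * m₂
    obtain ⟨a, ha, hxa⟩ := mem_starSet.mp hx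
    have hd1 : q₂ ∣ x - a * m₂ := nstar_dvd hq₂ hxa
    have hd2 : q₁ * m₂ ∣ (a - m₁) * m₂ := Nat.mul_dvd_mul_right (hq₁ a ha) m₂
    have hle1 : a * m₂ ≤ x := nstar_le hxa
    have hle2 : m₁ * m₂ ≤ a * m₂ := Nat.mul_le_mul_right m₂ (Nat.sInf_le ha)
    have hsub : (a - m₁) * m₂ = a * m₂ - m₁ * m₂ := Nat.sub_mul a m₁ m₂
    have hkey : x - m₁ * m₂ = (x - a * m₂) + (a * m₂ - m₁ * m₂) := by omega
    rw [hkey, ← hsub]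
    exact Nat.dvd_add ((Nat.gcd_dvd_left _ _).trans hd1)
      ((Nat.gcd_dvd_right _ _).trans hd2)
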